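/- The greedy first-price allocation is revenue-maximizing: the click vector c^G produced by the multi-slot greedy first-price mechanism is schedule-feasible, satisfies c^G_i ≤ B_i/b_i for every i, and achieves Σ_i b_i·c^G_i = max{ Σ_i b_i·c_i : c_i ≥ 0, c_i ≤ B_i/b_i for all i, and (c_1, …, c_n) is schedule-feasible }. -/

import Mathlib

/-- A click vector `c` is schedule-feasible for slot rates
`D 0 > D 1 > … > D (n-1) ≥ 0` if for every `ℓ` the sum of the `ℓ` largest
entries of `c` is at most `D 0 + … + D (ℓ-1)`; equivalently, the sum of `c`
over every `ℓ`-element subset is at most the sum of the top `ℓ` slot rates. -/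
def ScheduleFeasible (n : ℕ) (D c : Fin n → ℝ) : Prop :=
  ∀ T : Finset (Fin n),
    ∑ i ∈ T, c i ≤ ∑ j ∈ Finset.univ.filter (fun j : Fin n => (j : ℕ) < T.card), D j

open Finset

namespace GFP

variable {n : ℕ}

noncomputable def gG (n : ℕ) (D : Fin n → ℝ) (k : ℕ) : ℝ :=
  ∑ j ∈ Finset.univ.filter (fun j : Fin n => (j : ℕ) < k), D j

lemma schedule_iff {D c : Fin n → ℝ} :
    ScheduleFeasible n D c ↔ ∀ T : Finset (Fin n), ∑ i ∈ T, c i ≤ gG n D T.card := Iff.rfl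

lemma gG_zero (D : Fin n → ℝ) : gG n D 0 = 0 := by simp [gG]

lemma gG_nonneg {D : Fin n → ℝ} (hD0 : ∀ j, 0 ≤ D j) (k : ℕ) : 0 ≤ gG n D k :=
  Finset.sum_nonneg fun j _ => hD0 j

lemma gG_mono {D : Fin n → ℝ} (hD0 : ∀ j, 0 ≤ D j) {k l : ℕ} (h : k ≤ l) :
    gG n D k ≤ gG n D l := by
  apply Finset.sum_le_sum_of_subset_of_nonneg
  · exact Finset.monotone_filter_right _ (fun j _ hj => lt_of_lt_of_le hj h)
  · exact fun j _ _ => hD0 j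

noncomputable def gInc (n : ℕ) (D : Fin n → ℝ) (k : ℕ) : ℝ :=
  if h : k < n then D ⟨k, h⟩ else 0

lemma gG_succ (D : Fin n → ℝ) (k : ℕ) : gG n D (k + 1) = gG n D k + gInc n D k := by
  by_cases h : k < n
  · have hpt : ∀ j : Fin n, (if (j : ℕ) < k + 1 then D j else 0)
        = (if (j : ℕ) < k then D j else 0) + (if j = ⟨k, h⟩ then D j else 0) := by
      intro j
      rcases lt_trichotomy (j : ℕ) k with hj | hj | hj
      · rw [if_pos (by omega), if_pos hj,
          if_neg (show ¬ j = ⟨k, h⟩ by simp only [Fin.ext_iff]; omega), add_zero]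
      · rw [if_pos (by omega), if_neg (by omega),
          if_pos (show j = ⟨k, h⟩ from Fin.ext_iff.mpr hj), zero_add]
      · rw [if_neg (by omega), if_neg (by omega),
          if_neg (show ¬ j = ⟨k, h⟩ by simp only [Fin.ext_iff]; omega), add_zero]
    rw [gG, gG, Finset.sum_filter, Finset.sum_filter, gInc, dif_pos h,
      Finset.sum_congr rfl (fun j _ => hpt j), Finset.sum_add_distrib,
      Finset.sum_ite_eq' Finset.univ (⟨k, h⟩ : Fin n) D, if_pos (Finset.mem_univ _)]
  · rw [gG, gG, gInc, dif_neg h, add_zero]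
    apply Finset.sum_congr _ (fun _ _ => rfl)
    apply Finset.filter_congr
    intro j _
    have := j.isLt
    constructor <;> intro <;> omega

lemma gInc_le {D : Fin n → ℝ} (hD : StrictAnti D) (hD0 : ∀ j, 0 ≤ D j) {a k : ℕ}
    (h : a ≤ k) : gInc n D k ≤ gInc n D a := by
  unfold gInc
  by_cases hk : k < n
  · rw [dif_pos hk, dif_pos (lt_of_le_of_lt h hk)]
    rcases eq_or_lt_of_le h with rfl | hlt
    · exact le_refl _
    · exact le_of_lt (hD (show (⟨a, _⟩ : Fin n) < ⟨k, hk⟩ from hlt))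
  · rw [dif_neg hk]
    split
    · exact hD0 _
    · exact le_refl _

lemma gG_shift {D : Fin n → ℝ} (hD : StrictAnti D) (hD0 : ∀ j, 0 ≤ D j) (r : ℕ) :
    ∀ {a k : ℕ}, a ≤ k → gG n D (k + r) + gG n D a ≤ gG n D (a + r) + gG n D k := by
  induction r with
  | zero => intro a k h; simp [add_comm]
  | succ r ih =>
      intro a k h
      have h1 := ih h
      have h2 := gInc_le hD hD0 (show a + r ≤ k + r by omega)
      rw [show k + (r + 1) = (k + r) + 1 by omega, gG_succ,
        show a + (r + 1) = (a + r) + 1 by omega, gG_succ]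
      linarith

lemma gG_union_inter {D : Fin n → ℝ} (hD : StrictAnti D) (hD0 : ∀ j, 0 ≤ D j)
    {s t p q : ℕ} (hqs : q ≤ s) (hqt : q ≤ t) (hpq : p + q = s + t) :
    gG n D p + gG n D q ≤ gG n D s + gG n D t := by
  have h := gG_shift hD hD0 (s - q) hqt
  rw [show t + (s - q) = p by omega, show q + (s - q) = s by omega] at h
  exact h

lemma tight_union {D x : Fin n → ℝ} (hD : StrictAnti D) (hD0 : ∀ j, 0 ≤ D j)
    (hx : ScheduleFeasible n D x) {S T : Finset (Fin n)}
    (hS : ∑ j ∈ S, x j = gG n D S.card) (hT : ∑ j ∈ T, x j = gG n D T.card) :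
    ∑ j ∈ S ∪ T, x j = gG n D (S ∪ T).card := by
  have h1 : ∑ j ∈ S ∪ T, x j ≤ gG n D (S ∪ T).card := hx _
  have h2 : ∑ j ∈ S ∩ T, x j ≤ gG n D (S ∩ T).card := hx _
  have h3 : ∑ j ∈ S ∪ T, x j + ∑ j ∈ S ∩ T, x j = ∑ j ∈ S, x j + ∑ j ∈ T, x j :=
    Finset.sum_union_inter
  have h4 := Finset.card_union_add_card_inter S T
  have h5 : gG n D (S ∪ T).card + gG n D (S ∩ T).card ≤ gG n D S.card + gG n D T.card :=
    gG_union_inter hD hD0 (Finset.card_le_card Finset.inter_subset_left)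
      (Finset.card_le_card Finset.inter_subset_right) h4
  linarith

noncomputable def greedy (n : ℕ) (D u : Fin n → ℝ) (i : Fin n) : ℝ :=
  sSup {c : ℝ | 0 ≤ c ∧ c ≤ u i ∧
    ScheduleFeasible n D fun j => if h : j < i then greedy n D u j else if j = i then c else 0}
termination_by (i : ℕ)
decreasing_by exact h

def prefVec (x : Fin n → ℝ) (m : ℕ) : Fin n → ℝ := fun j => if (j : ℕ) < m then x j else 0

lemma prefVec_all (x : Fin n → ℝ) : prefVec x n = x := by
  funext j; exact if_pos j.isLt

lemma prefVec_zero_feas {D : Fin n → ℝ} (hD0 : ∀ j, 0 ≤ D j) (x : Fin n → ℝ) :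
    ScheduleFeasible n D (prefVec x 0) := by
  intro T
  have h : ∀ j ∈ T, prefVec x 0 j = 0 := fun j _ => if_neg (Nat.not_lt_zero _)
  rw [Finset.sum_congr rfl h, Finset.sum_const_zero]
  exact gG_nonneg hD0 _

lemma sum_vec (x : Fin n → ℝ) (i : Fin n) (c : ℝ) (T : Finset (Fin n)) :
    ∑ j ∈ T, (if j < i then x j else if j = i then c else 0)
      = ∑ j ∈ T, prefVec x (i : ℕ) j + (if i ∈ T then c else 0) := by
  have hpt : ∀ j : Fin n, (if j < i then x j else if j = i then c else 0)
      = prefVec x (i : ℕ) j + (if j = i then c else 0) := by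
    intro j
    unfold prefVec
    by_cases h1 : (j : ℕ) < (i : ℕ)
    · rw [if_pos (Fin.lt_def.mpr h1), if_pos h1,
        if_neg (show ¬ j = i by simp only [Fin.ext_iff]; omega), add_zero]
    · by_cases h2 : j = i
      · subst h2
        rw [if_neg (lt_irrefl j), if_neg h1, if_pos rfl, zero_add]
      · rw [if_neg (show ¬ j < i from fun hc => h1 (Fin.lt_def.mp hc)), if_neg h1,
          if_neg h2, add_zero]
  rw [Finset.sum_congr rfl (fun j _ => hpt j), Finset.sum_add_distrib,
    Finset.sum_ite_eq' T i (fun _ => c)]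

lemma sum_vec' (x : Fin n → ℝ) (i : Fin n) (c : ℝ) (T : Finset (Fin n)) :
    ∑ j ∈ T, (if j < i then x j else if j = i then c else 0)
      = ∑ j ∈ T, prefVec x ((i : ℕ) + 1) j + (if i ∈ T then c - x i else 0) := by
  have hpt : ∀ j : Fin n, (if j < i then x j else if j = i then c else 0)
      = prefVec x ((i : ℕ) + 1) j + (if j = i then c - x i else 0) := by
    intro j
    unfold prefVec
    by_cases h1 : (j : ℕ) < (i : ℕ)
    · rw [if_pos (Fin.lt_def.mpr h1), if_pos (by omega),
        if_neg (show ¬ j = i by simp only [Fin.ext_iff]; omega), add_zero]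
    · by_cases h2 : j = i
      · subst h2
        rw [if_neg (lt_irrefl j), if_pos (by omega : (j:ℕ) < (j:ℕ)+1), if_pos rfl, if_pos rfl]
        ring
      · have h3 : ¬ (j : ℕ) < (i : ℕ) + 1 := by
          simp only [Fin.ext_iff] at h2; omega
        rw [if_neg (show ¬ j < i from fun hc => h1 (Fin.lt_def.mp hc)), if_neg h2,
          if_neg h3, if_neg h2, add_zero]
  rw [Finset.sum_congr rfl (fun j _ => hpt j), Finset.sum_add_distrib,
    Finset.sum_ite_eq' T i (fun _ => c - x i)]

lemma vec_top (x : Fin n → ℝ) (i : Fin n) :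
    (fun j => if j < i then x j else if j = i then x i else 0) = prefVec x ((i : ℕ) + 1) := by
  funext j
  unfold prefVec
  by_cases h1 : (j : ℕ) < (i : ℕ)
  · rw [if_pos (Fin.lt_def.mpr h1), if_pos (by omega)]
  · by_cases h2 : j = i
    · subst h2
      rw [if_neg (lt_irrefl j), if_pos rfl, if_pos (by omega)]
    · have h3 : ¬ (j : ℕ) < (i : ℕ) + 1 := by
        simp only [Fin.ext_iff] at h2; omega
      rw [if_neg (show ¬ j < i from fun hc => h1 (Fin.lt_def.mp hc)), if_neg h2, if_neg h3]

lemma greedy_main {D u : Fin n → ℝ} (hD0 : ∀ j, 0 ≤ D j) (hu : ∀ i, 0 < u i) :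
    ∀ m : ℕ, m ≤ n → ScheduleFeasible n D (prefVec (greedy n D u) m) ∧
      ∀ i : Fin n, (i : ℕ) < m → IsGreatest
        {c : ℝ | 0 ≤ c ∧ c ≤ u i ∧ ScheduleFeasible n D
          (fun j => if j < i then greedy n D u j else if j = i then c else 0)}
        (greedy n D u i) := by
  intro m
  induction m with
  | zero => exact fun _ => ⟨prefVec_zero_feas hD0 _, fun i hi => absurd hi (by omega)⟩
  | succ m ih =>
      intro hmn
      obtain ⟨hpre, hIG⟩ := ih (by omega)
      have hm : m < n := by omega
      set x := greedy n D u with hx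
      set i : Fin n := ⟨m, hm⟩ with hi
      set S : Set ℝ := {c : ℝ | 0 ≤ c ∧ c ≤ u i ∧ ScheduleFeasible n D
        (fun j => if j < i then x j else if j = i then c else 0)} with hSdef
      have hS0 : (0 : ℝ) ∈ S := by
        refine ⟨le_refl _, le_of_lt (hu i), ?_⟩
        intro T
        refine le_trans (le_of_eq (sum_vec x i 0 T)) ?_
        have h0 : (if i ∈ T then (0 : ℝ) else 0) = 0 := by split <;> rfl
        rw [h0, add_zero]
        exact hpre T
      have hbdd : BddAbove S := ⟨u i, fun c hc => hc.2.1⟩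
      have hclosed : IsClosed S := by
        have hrw : S = Set.Ici (0 : ℝ) ∩ Set.Iic (u i) ∩
            ⋂ T : Finset (Fin n), {c : ℝ |
              ∑ j ∈ T, (if j < i then x j else if j = i then c else 0) ≤ gG n D T.card} := by
          ext c
          simp only [hSdef, Set.mem_setOf_eq, Set.mem_inter_iff, Set.mem_Ici, Set.mem_Iic,
            Set.mem_iInter, schedule_iff]
          tauto
        rw [hrw]
        refine (isClosed_Ici.inter isClosed_Iic).inter (isClosed_iInter fun T => ?_)
        refine isClosed_le ?_ continuous_const
        apply continuous_finset_sum
        intro j _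
        by_cases h1 : j < i
        · simp only [if_pos h1]; exact continuous_const
        · by_cases h2 : j = i
          · simp only [if_neg h1, if_pos h2]; exact continuous_id
          · simp only [if_neg h1, if_neg h2]; exact continuous_const
      have hmem : sSup S ∈ S := hclosed.csSup_mem ⟨0, hS0⟩ hbdd
      have hgx : x i = sSup S := by
        rw [hx, greedy]
        congr 1
      have hIGi : IsGreatest S (x i) := by
        rw [hgx]
        exact ⟨hmem, fun c hc => le_csSup hbdd hc⟩
      have hfeas' : ScheduleFeasible n D (prefVec x (m + 1)) := by
        have h := hIGi.1.2.2
        rw [vec_top x i] at h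
        exact h
      refine ⟨hfeas', ?_⟩
      intro i' hi'
      rcases Nat.lt_or_ge (i' : ℕ) m with h | h
      · exact hIG i' h
      · have hii : i' = i := by
          apply Fin.ext
          show (i' : ℕ) = m
          omega
        rw [hii]
        exact hIGi

lemma greedy_feas {D u : Fin n → ℝ} (hD0 : ∀ j, 0 ≤ D j) (hu : ∀ i, 0 < u i) :
    ScheduleFeasible n D (greedy n D u) := by
  have h := (greedy_main hD0 hu n le_rfl).1
  rwa [prefVec_all] at h

lemma greedy_isGreatest {D u : Fin n → ℝ} (hD0 : ∀ j, 0 ≤ D j) (hu : ∀ i, 0 < u i)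
    (i : Fin n) : IsGreatest
      {c : ℝ | 0 ≤ c ∧ c ≤ u i ∧ ScheduleFeasible n D
        (fun j => if j < i then greedy n D u j else if j = i then c else 0)}
      (greedy n D u i) :=
  (greedy_main hD0 hu n le_rfl).2 i i.isLt

lemma exists_tight {D u : Fin n → ℝ} (hD0 : ∀ j, 0 ≤ D j) (hu : ∀ i, 0 < u i)
    (i : Fin n) (hlt : greedy n D u i < u i) :
    ∃ T : Finset (Fin n), i ∈ T ∧ (∀ k ∈ T, (k : ℕ) ≤ (i : ℕ)) ∧
      ∑ j ∈ T, greedy n D u j = gG n D T.card := by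
  classical
  set x := greedy n D u with hx
  have hfeas : ScheduleFeasible n D x := greedy_feas hD0 hu
  have hpre : ScheduleFeasible n D (prefVec x ((i : ℕ) + 1)) :=
    (greedy_main hD0 hu ((i : ℕ) + 1) i.isLt).1
  have hIG := greedy_isGreatest hD0 hu i
  set F : Finset (Finset (Fin n)) :=
    Finset.univ.filter (fun T : Finset (Fin n) => i ∈ T) with hF
  have hFne : F.Nonempty := ⟨{i}, by simp [hF]⟩
  obtain ⟨T0, hT0F, hT0min⟩ :=
    Finset.exists_min_image F (fun T => gG n D T.card - ∑ j ∈ T, prefVec x ((i : ℕ) + 1) j) hFne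
  have hT0i : i ∈ T0 := (Finset.mem_filter.mp hT0F).2
  by_cases hzero : gG n D T0.card - ∑ j ∈ T0, prefVec x ((i : ℕ) + 1) j ≤ 0
  · have heq : ∑ j ∈ T0, prefVec x ((i : ℕ) + 1) j = gG n D T0.card :=
      le_antisymm (hpre T0) (by linarith)
    refine ⟨T0.filter (fun k : Fin n => (k : ℕ) ≤ (i : ℕ)),
      Finset.mem_filter.mpr ⟨hT0i, le_refl _⟩, fun k hk => (Finset.mem_filter.mp hk).2, ?_⟩
    have hsum : ∑ j ∈ T0.filter (fun k : Fin n => (k : ℕ) ≤ (i : ℕ)), x j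
        = ∑ j ∈ T0, prefVec x ((i : ℕ) + 1) j := by
      rw [Finset.sum_filter]
      apply Finset.sum_congr rfl
      intro j _
      simp only [prefVec, Nat.lt_succ_iff]
    have hle1 : ∑ j ∈ T0.filter (fun k : Fin n => (k : ℕ) ≤ (i : ℕ)), x j
        ≤ gG n D (T0.filter (fun k : Fin n => (k : ℕ) ≤ (i : ℕ))).card := hfeas _
    have hle2 : gG n D (T0.filter (fun k : Fin n => (k : ℕ) ≤ (i : ℕ))).card ≤ gG n D T0.card :=
      gG_mono hD0 (Finset.card_le_card (Finset.filter_subset _ _))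
    linarith
  · exfalso
    push_neg at hzero
    set δ : ℝ := min (gG n D T0.card - ∑ j ∈ T0, prefVec x ((i : ℕ) + 1) j) (u i - x i) with hδdef
    have hδ : 0 < δ := lt_min hzero (by linarith)
    have h0x : 0 ≤ x i := hIG.1.1
    have hmem : x i + δ ∈ {c : ℝ | 0 ≤ c ∧ c ≤ u i ∧ ScheduleFeasible n D
        (fun j => if j < i then x j else if j = i then c else 0)} := by
      refine ⟨by linarith, ?_, ?_⟩
      · have h := min_le_right (gG n D T0.card - ∑ j ∈ T0, prefVec x ((i : ℕ) + 1) j) (u i - x i)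
        rw [← hδdef] at h
        linarith
      · intro T
        refine le_trans (le_of_eq (sum_vec' x i (x i + δ) T)) ?_
        by_cases hiT : i ∈ T
        · rw [if_pos hiT]
          have hTF : T ∈ F := Finset.mem_filter.mpr ⟨Finset.mem_univ _, hiT⟩
          have hmin := hT0min T hTF
          have hδle : δ ≤ gG n D T0.card - ∑ j ∈ T0, prefVec x ((i : ℕ) + 1) j := min_le_left _ _
          have hrw : x i + δ - x i = δ := by ring
          rw [hrw]
          linarith [show gG n D T.card =
            ∑ j ∈ Finset.univ.filter (fun j : Fin n => (j : ℕ) < T.card), D j from rfl]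
        · rw [if_neg hiT, add_zero]
          exact hpre T
    have h : x i + δ ≤ x i := hIG.2 hmem
    linarith

lemma greedy_prefix_opt {D u : Fin n → ℝ} (hD : StrictAnti D) (hD0 : ∀ j, 0 ≤ D j)
    (hu : ∀ i, 0 < u i) (c : Fin n → ℝ) (hcap : ∀ i, c i ≤ u i)
    (hcf : ScheduleFeasible n D c) (m : ℕ) :
    ∑ j ∈ Finset.univ.filter (fun j : Fin n => (j : ℕ) < m), c j
      ≤ ∑ j ∈ Finset.univ.filter (fun j : Fin n => (j : ℕ) < m), greedy n D u j := by
  classical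
  set x := greedy n D u with hx
  have hxf : ScheduleFeasible n D x := greedy_feas hD0 hu
  have hxcap : ∀ i, x i ≤ u i := fun i => (greedy_isGreatest hD0 hu i).1.2.1
  have hTex : ∀ j : Fin n, ∃ T : Finset (Fin n), (∀ k ∈ T, (k : ℕ) ≤ (j : ℕ)) ∧
      (∑ l ∈ T, x l = gG n D T.card) ∧ (x j < u j → j ∈ T) := by
    intro j
    by_cases h : x j < u j
    · obtain ⟨T, h1, h2, h3⟩ := exists_tight hD0 hu j h
      exact ⟨T, h2, h3, fun _ => h1⟩
    · exact ⟨∅, by simp, by simp [gG_zero], fun h' => absurd h' h⟩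
  choose T hTle hTtight hTmem using hTex
  set P : Finset (Fin n) := Finset.univ.filter (fun j : Fin n => (j : ℕ) < m) with hP
  set A : Finset (Fin n) := P.filter (fun j => x j < u j) with hA
  set U : Finset (Fin n) := A.sup T with hU
  have hUtight : ∑ l ∈ U, x l = gG n D U.card := by
    rw [hU]
    apply Finset.sup_induction (p := fun (W : Finset (Fin n)) => ∑ l ∈ W, x l = gG n D W.card)
    · simp [gG_zero]
    · intro S1 h1 S2 h2
      exact tight_union hD hD0 hxf h1 h2
    · intro j _; exact hTtight j
  have hUP' : U ≤ P := by
    apply Finset.sup_le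
    intro j hj
    intro k hk
    have hkj := hTle j k hk
    have hjP : j ∈ P := Finset.mem_of_mem_filter j hj
    have hjm : (j : ℕ) < m := (Finset.mem_filter.mp hjP).2
    exact Finset.mem_filter.mpr ⟨Finset.mem_univ _, by omega⟩
  have hUP : U ⊆ P := hUP'
  have hxeq : ∀ j ∈ P \ U, x j = u j := by
    intro j hj
    obtain ⟨hjP, hjU⟩ := Finset.mem_sdiff.mp hj
    by_contra hne
    have hlt : x j < u j := lt_of_le_of_ne (hxcap j) hne
    have hjA : j ∈ A := Finset.mem_filter.mpr ⟨hjP, hlt⟩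
    exact hjU ((Finset.le_sup hjA : T j ⊆ U) (hTmem j hlt))
  have h1 : ∑ j ∈ U, c j ≤ ∑ j ∈ U, x j := by
    calc ∑ j ∈ U, c j ≤ gG n D U.card := hcf U
      _ = ∑ j ∈ U, x j := hUtight.symm
  have h2 : ∑ j ∈ P \ U, c j ≤ ∑ j ∈ P \ U, x j := by
    apply Finset.sum_le_sum
    intro j hj
    rw [hxeq j hj]
    exact hcap j
  calc ∑ j ∈ P, c j = ∑ j ∈ P \ U, c j + ∑ j ∈ U, c j := (Finset.sum_sdiff hUP).symm
    _ ≤ ∑ j ∈ P \ U, x j + ∑ j ∈ U, x j := add_le_add h2 h1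
    _ = ∑ j ∈ P, x j := Finset.sum_sdiff hUP

noncomputable def bext (n : ℕ) (b : Fin n → ℝ) (m : ℕ) : ℝ :=
  if h : m < n then b ⟨m, h⟩ else 0

lemma bext_tele (b : Fin n → ℝ) (i : Fin n) :
    ∑ m ∈ Finset.Ico (i : ℕ) n, (bext n b m - bext n b (m + 1)) = b i := by
  rw [Finset.sum_Ico_eq_sub _ (le_of_lt i.isLt), Finset.sum_range_sub' (f := bext n b),
    Finset.sum_range_sub' (f := bext n b)]
  have h1 : bext n b n = 0 := dif_neg (lt_irrefl n)
  have h2 : bext n b (i : ℕ) = b i := by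
    rw [bext, dif_pos i.isLt]
  rw [h1, h2]
  ring

lemma abel_identity (b f : Fin n → ℝ) :
    ∑ i, b i * f i = ∑ m ∈ Finset.range n, (bext n b m - bext n b (m + 1)) *
      ∑ j ∈ Finset.univ.filter (fun j : Fin n => (j : ℕ) < m + 1), f j := by
  classical
  have step1 : ∑ i, b i * f i = ∑ i : Fin n, ∑ m ∈ Finset.range n,
      (if (i : ℕ) ≤ m then (bext n b m - bext n b (m + 1)) * f i else 0) := by
    apply Finset.sum_congr rfl
    intro i _
    rw [← bext_tele b i, Finset.sum_mul]
    have hIco : Finset.Ico (i : ℕ) n = (Finset.range n).filter (fun m => (i : ℕ) ≤ m) := by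
      ext m
      simp only [Finset.mem_Ico, Finset.mem_filter, Finset.mem_range]
      omega
    rw [hIco, Finset.sum_filter]
  rw [step1, Finset.sum_comm]
  apply Finset.sum_congr rfl
  intro m _
  rw [Finset.mul_sum, Finset.sum_filter]
  apply Finset.sum_congr rfl
  intro i _
  simp only [Nat.lt_succ_iff]

end GFP

/-- The greedy first-price mechanism processes bidders in decreasing order of
bid (`b` is given already sorted, decreasing) and gives bidder `i` the maximum
number of clicks `c` with `c ≤ B i / b i` keeping the partial click vector
schedule-feasible.  The resulting click vector `cG` is schedule-feasible,
respects all budget caps, and maximizes the revenue `Σ_i b_i·c_i` among all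
nonnegative schedule-feasible click vectors respecting the budget caps. -/
theorem gfp_multi_slot_revenue_maximizing (n : ℕ) (b B D : Fin n → ℝ)
    (hb : Antitone b) (hbpos : ∀ i, 0 < b i) (hB : ∀ i, 0 < B i)
    (hD : StrictAnti D) (hD0 : ∀ j, 0 ≤ D j) :
    ∃ cG : Fin n → ℝ,
      (∀ i : Fin n, IsGreatest {c : ℝ | 0 ≤ c ∧ c ≤ B i / b i ∧
          ScheduleFeasible n D
            (fun j => if j < i then cG j else if j = i then c else 0)} (cG i)) ∧
      ScheduleFeasible n D cG ∧
      (∀ i, cG i ≤ B i / b i) ∧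
      IsGreatest {r : ℝ | ∃ c : Fin n → ℝ, (∀ i, 0 ≤ c i) ∧
          (∀ i, c i ≤ B i / b i) ∧ ScheduleFeasible n D c ∧
          r = ∑ i, b i * c i}
        (∑ i, b i * cG i) := by
  classical
  have hu : ∀ i, 0 < (fun i => B i / b i) i := fun i => div_pos (hB i) (hbpos i)
  refine ⟨GFP.greedy n D (fun i => B i / b i), ?_, GFP.greedy_feas hD0 hu, ?_, ?_, ?_⟩
  · exact fun i => GFP.greedy_isGreatest hD0 hu i
  · exact fun i => (GFP.greedy_isGreatest hD0 hu i).1.2.1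
  · exact ⟨GFP.greedy n D (fun i => B i / b i),
      fun i => (GFP.greedy_isGreatest hD0 hu i).1.1,
      fun i => (GFP.greedy_isGreatest hD0 hu i).1.2.1, GFP.greedy_feas hD0 hu, rfl⟩
  · rintro r ⟨c, hc0, hcap, hcf, rfl⟩
    rw [GFP.abel_identity b c, GFP.abel_identity b (GFP.greedy n D (fun i => B i / b i))]
    apply Finset.sum_le_sum
    intro m _
    have hd : 0 ≤ GFP.bext n b m - GFP.bext n b (m + 1) := by
      unfold GFP.bext
      by_cases h1 : m + 1 < n
      · rw [dif_pos h1, dif_pos (by omega : m < n)]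
        have hle : (⟨m, by omega⟩ : Fin n) ≤ ⟨m + 1, h1⟩ := by
          simp [Fin.le_def]
        linarith [hb hle]
      · rw [dif_neg h1]
        by_cases h2 : m < n
        · rw [dif_pos h2]; linarith [hbpos ⟨m, h2⟩]
        · rw [dif_neg h2]; linarith
    exact mul_le_mul_of_nonneg_left
      (GFP.greedy_prefix_opt hD hD0 hu c hcap hcf (m + 1)) hd
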